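/- A binate group has trivial abelianization. More precisely, if G is binate (for every finitely generated subgroup H ≤ G there are ψ : H → G with [H, ψ(H)] = 1 and t ∈ G with t⁻¹ψ(h)t = hψ(h) for all h ∈ H), then every element of G is a product of commutators. -/

import Mathlib

/-- A binate group has trivial abelianization: if for every finitely generated
subgroup `H ≤ G` there are `ψ : H →* G` with `[H, ψ(H)] = 1` and `t ∈ G` with
`t⁻¹ ψ(h) t = h ψ(h)` for all `h ∈ H`, then `G` is its own commutator subgroup. -/
theorem stmt11 {G : Type*} [Group G]
    (hb : ∀ H : Subgroup G, H.FG → ∃ (ψ : ↥H →* G) (t : G),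
      (∀ h k : ↥H, Commute ((h : G)) (ψ k)) ∧
      (∀ h : ↥H, t⁻¹ * ψ h * t = (h : G) * ψ h)) :
    commutator G = ⊤ := by
  rw [Subgroup.eq_top_iff']
  intro g
  obtain ⟨ψ, t, -, hconj⟩ := hb (Subgroup.closure {g})
    ⟨{g}, by simp⟩
  have hg : g ∈ Subgroup.closure {g} := Subgroup.subset_closure rfl
  have key := hconj ⟨g, hg⟩
  open scoped commutatorElement in
  have : g = ⁅t⁻¹, ψ ⟨g, hg⟩⁆ := by
    simp only [commutatorElement_def, inv_inv]
    rw [key]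
    group
  rw [this, commutator_def]
  exact Subgroup.commutator_mem_commutator (Subgroup.mem_top _) (Subgroup.mem_top _)
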